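/- arXiv:2005.11343 — 2 statements merged into one kernel-verified Lean document; each statement's English description precedes it below -/
import Mathlib

section
/- For positive reals a, b, c, d, the quadratic λ² + (a+b+c+d)λ + (ac+ad+bd) has two real roots, i.e. its discriminant (a+b+c+d)² − 4(ac+ad+bd) is nonnegative. -/
theorem stmt1 (a b c d : ℝ) (ha : 0 < a) (hb : 0 < b) (hc : 0 < c) (hd : 0 < d) :
    0 ≤ (a + b + c + d) ^ 2 - 4 * (a * c + a * d + b * d) ∧
    ∃ r₁ r₂ : ℝ, ∀ lam : ℝ,
      lam ^ 2 + (a + b + c + d) * lam + (a * c + a * d + b * d) = (lam - r₁) * (lam - r₂) := by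
  have hD : 0 ≤ (a + b + c + d) ^ 2 - 4 * (a * c + a * d + b * d) := by nlinarith [sq_nonneg (a + b - c - d), mul_pos hb hc]
  refine ⟨hD, ?_⟩
  set D := (a + b + c + d) ^ 2 - 4 * (a * c + a * d + b * d) with hDdef
  refine ⟨(-(a + b + c + d) + Real.sqrt D) / 2, (-(a + b + c + d) - Real.sqrt D) / 2, fun lam => ?_⟩
  have hs : Real.sqrt D ^ 2 = D := Real.sq_sqrt hD
  nlinarith [hs]
end

section
/- With all parameters positive, the inequality (k_ON k_A/(k_I(k_ON+k_OFF) + k_ON k_A))·(1 + R) < 1, where R = (α_{m2,I}/α_{m2,A})·((γ_{m2}+α_{p2})/(γ_{m2}+α_{p1}+α_{p2}))·(k_I/k_A), holds if and only if α_{m2,I}/α_{m2,A} < (1 + k_OFF/k_ON)·(1 + α_{p1}/(γ_{m2}+α_{p2})). -/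
theorem stmt16 (kON kOFF kA kI αp1 αp2 αm2I αm2A γm2 : ℝ)
    (h1 : 0 < kON) (h2 : 0 < kOFF) (h3 : 0 < kA) (h4 : 0 < kI)
    (h5 : 0 < αp1) (h6 : 0 < αp2) (h7 : 0 < αm2I) (h8 : 0 < αm2A) (h9 : 0 < γm2) :
    ((kON * kA / (kI * (kON + kOFF) + kON * kA)) *
        (1 + (αm2I / αm2A) * ((γm2 + αp2) / (γm2 + αp1 + αp2)) * (kI / kA)) < 1)
      ↔ αm2I / αm2A < (1 + kOFF / kON) * (1 + αp1 / (γm2 + αp2)) := by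
  have hD : 0 < kI * (kON + kOFF) + kON * kA := by positivity
  rw [div_mul_eq_mul_div, div_lt_one hD, div_lt_iff₀ h8]
  field_simp
  constructor <;> intro h <;> nlinarith [mul_pos (mul_pos h4 h8) h3, mul_pos h1 h4, sq_nonneg kA, mul_pos h3 h3]
end
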